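/- The function F(t) = S(t) − 2·log(2/t), where S(t) = cosh(t)·log((cosh t +1)/(cosh t −1)) − 2, can be written as F(t) = (cosh t − 1)·log((cosh t + 1)/(cosh t − 1)) + log(t²·(cosh t + 1)/(4·(cosh t − 1))) − 2 for t > 0, and its second derivative satisfies |F''(t)| = O(log(1/t)) as t → 0⁺. -/

import Mathlib

open Filter

/-- `S(t) = cosh(t)·log((cosh t + 1)/(cosh t − 1)) − 2`. -/
noncomputable def Sfun (t : ℝ) : ℝ :=
  Real.cosh t * Real.log ((Real.cosh t + 1) / (Real.cosh t - 1)) - 2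

/-- `F(t) = S(t) − 2·log(2/t)`. -/
noncomputable def Ffun (t : ℝ) : ℝ := Sfun t - 2 * Real.log (2 / t)

lemma exp_est (x : ℝ) (hx : |x| ≤ 1) :
    |Real.exp x - (1 + x + x^2/2)| ≤ 2/9 * |x|^3 := by
  have h := Real.exp_bound hx (n := 3) (by norm_num)
  simp [Finset.sum_range_succ] at h
  calc |Real.exp x - (1 + x + x^2/2)| ≤ |x|^3 * (4/(6*3)) := by
        convert h using 2 <;> norm_num
    _ ≤ 2/9 * |x|^3 := by ring_nf; linarith

lemma cosh_sinh_est {t : ℝ} (h0 : 0 ≤ t) (h1 : t ≤ 1) :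
    Real.cosh t ≤ 1 + t^2/2 + 2/9*t^3 ∧ 1 + t^2/2 - 2/9*t^3 ≤ Real.cosh t ∧
      Real.sinh t ≤ t + 2/9*t^3 := by
  have hat : |t| ≤ 1 := by rwa [abs_of_nonneg h0]
  have hant : |(-t)| ≤ 1 := by rwa [abs_neg]
  have e1 := exp_est t hat
  have e2 := exp_est (-t) hant
  rw [abs_of_nonneg h0] at e1
  rw [abs_neg, abs_of_nonneg h0] at e2
  rw [abs_le] at e1 e2
  rw [Real.cosh_eq, Real.sinh_eq]
  refine ⟨by nlinarith [e1.1, e1.2, e2.1, e2.2], by nlinarith [e1.1, e2.1],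
    by nlinarith [e1.2, e2.1]⟩

noncomputable def F2 (t : ℝ) : ℝ :=
  Real.cosh t * (Real.log (Real.cosh t + 1) - Real.log (Real.cosh t - 1))
    - 2 - 2 * Real.log 2 + 2 * Real.log t

noncomputable def Gfun (t : ℝ) : ℝ :=
  Real.sinh t * (Real.log (Real.cosh t + 1) - Real.log (Real.cosh t - 1))
    - 2 * Real.cosh t / Real.sinh t + 2 * t⁻¹

noncomputable def Hfun (t : ℝ) : ℝ :=
  Real.cosh t * (Real.log (Real.cosh t + 1) - Real.log (Real.cosh t - 1))
    - 2 + 2 / Real.sinh t ^ 2 - 2 / t ^ 2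

lemma cosh_facts {t : ℝ} (ht : 0 < t) :
    Real.cosh t + 1 ≠ 0 ∧ Real.cosh t - 1 ≠ 0 ∧ Real.sinh t ≠ 0 := by
  exact ⟨by nlinarith [Real.one_le_cosh t],
    sub_ne_zero.2 (Real.one_lt_cosh.2 ht.ne').ne', (Real.sinh_pos_iff.2 ht).ne'⟩

lemma div_key {t : ℝ} (ht : 0 < t) :
    Real.sinh t / (Real.cosh t + 1) - Real.sinh t / (Real.cosh t - 1)
      = -(2 / Real.sinh t) := by
  obtain ⟨h1, h2, hs⟩ := cosh_facts ht
  have hsq := Real.cosh_sq_sub_sinh_sq t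
  field_simp
  linear_combination 2 * hsq

lemma F2_eq {t : ℝ} (ht : 0 < t) : Ffun t = F2 t := by
  obtain ⟨h1, h2, -⟩ := cosh_facts ht
  unfold Ffun Sfun F2
  rw [Real.log_div h1 h2, Real.log_div two_ne_zero ht.ne']
  ring

lemma hasDerivAt_F2 {t : ℝ} (ht : 0 < t) : HasDerivAt F2 (Gfun t) t := by
  obtain ⟨h1, h2, hs⟩ := cosh_facts ht
  have hl1 : HasDerivAt (fun t => Real.log (Real.cosh t + 1))
      (Real.sinh t / (Real.cosh t + 1)) t := ((Real.hasDerivAt_cosh t).add_const 1).log h1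
  have hl2 : HasDerivAt (fun t => Real.log (Real.cosh t - 1))
      (Real.sinh t / (Real.cosh t - 1)) t := ((Real.hasDerivAt_cosh t).sub_const 1).log h2
  have h3 := (Real.hasDerivAt_cosh t).mul (hl1.sub hl2)
  have h4 := (Real.hasDerivAt_log ht.ne').const_mul 2
  have key := ((h3.sub_const 2).sub_const (2 * Real.log 2)).add h4
  have heq : Real.sinh t * (Real.log (Real.cosh t + 1) - Real.log (Real.cosh t - 1)) +
      Real.cosh t * (Real.sinh t / (Real.cosh t + 1) - Real.sinh t / (Real.cosh t - 1)) +
      2 * t⁻¹ = Gfun t := by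
    rw [div_key ht]; unfold Gfun; ring
  exact heq ▸ key

lemma hasDerivAt_G {t : ℝ} (ht : 0 < t) : HasDerivAt Gfun (Hfun t) t := by
  obtain ⟨h1, h2, hs⟩ := cosh_facts ht
  have hsq := Real.cosh_sq_sub_sinh_sq t
  have hl1 : HasDerivAt (fun t => Real.log (Real.cosh t + 1))
      (Real.sinh t / (Real.cosh t + 1)) t := ((Real.hasDerivAt_cosh t).add_const 1).log h1
  have hl2 : HasDerivAt (fun t => Real.log (Real.cosh t - 1))
      (Real.sinh t / (Real.cosh t - 1)) t := ((Real.hasDerivAt_cosh t).sub_const 1).log h2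
  have hA := (Real.hasDerivAt_sinh t).mul (hl1.sub hl2)
  have hB := ((Real.hasDerivAt_cosh t).const_mul 2).div (Real.hasDerivAt_sinh t) hs
  have hC := (hasDerivAt_inv ht.ne').const_mul 2
  have key := (hA.sub hB).add hC
  have k2 : (2 * Real.sinh t * Real.sinh t - 2 * Real.cosh t * Real.cosh t) / Real.sinh t ^ 2
      = -(2 / Real.sinh t ^ 2) := by
    field_simp
    linear_combination (-1 : ℝ) * hsq
  have heq : Real.cosh t * (Real.log (Real.cosh t + 1) - Real.log (Real.cosh t - 1)) +
      Real.sinh t * (Real.sinh t / (Real.cosh t + 1) - Real.sinh t / (Real.cosh t - 1)) -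
      (2 * Real.sinh t * Real.sinh t - 2 * Real.cosh t * Real.cosh t) / Real.sinh t ^ 2 +
      2 * -(t ^ 2)⁻¹ = Hfun t := by
    rw [div_key ht, k2]; unfold Hfun
    field_simp
    ring
  exact heq ▸ key

lemma iter2 {t : ℝ} (ht : 0 < t) : iteratedDeriv 2 Ffun t = Hfun t := by
  have hd1 : ∀ x ∈ Set.Ioi (0:ℝ), deriv Ffun x = Gfun x := fun x hx => by
    have hF : Ffun =ᶠ[nhds x] F2 :=
      Filter.eventuallyEq_of_mem (Ioi_mem_nhds hx) (fun y hy => F2_eq hy)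
    rw [hF.deriv_eq, (hasDerivAt_F2 hx).deriv]
  have hG : deriv Ffun =ᶠ[nhds t] Gfun :=
    Filter.eventuallyEq_of_mem (Ioi_mem_nhds ht) hd1
  rw [iteratedDeriv_succ, iteratedDeriv_one, hG.deriv_eq, (hasDerivAt_G ht).deriv]

/-- The alternative expression for `F` on `(0,∞)`, and the bound
`|F''(t)| = O(log(1/t))` as `t → 0⁺`. -/
theorem F_formula_and_second_derivative_bound :
    (∀ t : ℝ, 0 < t →
      Ffun t = (Real.cosh t - 1) *
            Real.log ((Real.cosh t + 1) / (Real.cosh t - 1)) +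
          Real.log (t ^ 2 * (Real.cosh t + 1) / (4 * (Real.cosh t - 1))) - 2) ∧
    (fun t : ℝ => iteratedDeriv 2 Ffun t)
      =O[nhdsWithin 0 (Set.Ioi 0)] (fun t : ℝ => Real.log (1 / t)) := by
  constructor
  · intro t ht
    obtain ⟨h1, h2, -⟩ := cosh_facts ht
    have hlog4 : Real.log 4 = 2 * Real.log 2 := by
      rw [show (4:ℝ) = 2^2 by norm_num, Real.log_pow]; push_cast; ring
    unfold Ffun Sfun
    rw [Real.log_div h1 h2, Real.log_div two_ne_zero ht.ne',
      Real.log_div (mul_ne_zero (pow_ne_zero 2 ht.ne') h1) (mul_ne_zero (by norm_num) h2),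
      Real.log_mul (pow_ne_zero 2 ht.ne') h1,
      Real.log_mul (by norm_num : (4:ℝ) ≠ 0) h2,
      Real.log_pow, hlog4]
    push_cast; ring
  · rw [Asymptotics.isBigO_iff]
    refine ⟨100, ?_⟩
    filter_upwards [Ioo_mem_nhdsGT_of_mem
      (by norm_num : (0:ℝ) ∈ Set.Ico (0:ℝ) (1/2))] with t ht
    obtain ⟨ht0, ht5⟩ := ht
    rw [iter2 ht0]
    have hlogt : Real.log t < 0 := Real.log_neg ht0 (by linarith)
    have hL : Real.log (1/t) = -Real.log t := by rw [one_div, Real.log_inv]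
    have hlog2 := Real.log_two_gt_d9
    have hLlb : Real.log 2 ≤ -Real.log t := by
      have h := Real.log_le_log ht0 ht5.le
      rw [show (1:ℝ)/2 = 2⁻¹ by norm_num, Real.log_inv] at h; linarith
    obtain ⟨hcu, hcl, hsu⟩ := cosh_sinh_est ht0.le (by linarith)
    have hc2 : Real.cosh t ≤ 2 := by nlinarith
    have hcubd : Real.cosh t - 1 ≤ t^2 := by nlinarith
    have hclbd : t^2/3 ≤ Real.cosh t - 1 := by nlinarith
    have hcpos : (0:ℝ) < Real.cosh t - 1 := by nlinarith
    have hl1u : Real.log (Real.cosh t + 1) ≤ 2 :=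
      le_trans (Real.log_le_sub_one_of_pos (by nlinarith)) (by nlinarith)
    have hl1l : 0 ≤ Real.log (Real.cosh t + 1) := Real.log_nonneg (by nlinarith)
    have hl2u : Real.log (Real.cosh t - 1) ≤ 2 * Real.log t := by
      have h := Real.log_le_log hcpos hcubd
      rw [Real.log_pow] at h; push_cast at h; linarith
    have hl2l : 2 * Real.log t - 2 ≤ Real.log (Real.cosh t - 1) := by
      have h3 : Real.log (t^2/3) ≤ Real.log (Real.cosh t - 1) :=
        Real.log_le_log (by positivity) hclbd
      rw [Real.log_div (by positivity) (by norm_num), Real.log_pow] at h3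
      have h4 : Real.log 3 ≤ 2 :=
        le_trans (Real.log_le_sub_one_of_pos (by norm_num)) (by norm_num)
      push_cast at h3; linarith
    have hst : t ≤ Real.sinh t := Real.self_le_sinh_iff.2 ht0.le
    have hs2 : t^2 ≤ Real.sinh t^2 := by nlinarith
    have hspos : 0 < Real.sinh t := lt_of_lt_of_le ht0 hst
    have e1 : 2 / Real.sinh t^2 ≤ 2 / t^2 :=
      div_le_div_of_nonneg_left (by norm_num) (by positivity) hs2
    have e2 : 2 / t^2 - 2 / Real.sinh t^2 ≤ 2 := by
      rw [div_sub_div _ _ (by positivity) (by positivity), div_le_iff₀ (by positivity)]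
      nlinarith [sq_nonneg t, sq_nonneg (Real.sinh t - t)]
    rw [Real.norm_eq_abs, Real.norm_eq_abs, hL,
      abs_of_pos (by linarith : (0:ℝ) < -Real.log t)]
    unfold Hfun
    have hll : 0 ≤ Real.log (Real.cosh t + 1) - Real.log (Real.cosh t - 1) := by linarith
    have hp1 : Real.cosh t * (Real.log (Real.cosh t + 1) - Real.log (Real.cosh t - 1))
        ≤ 2 * (Real.log (Real.cosh t + 1) - Real.log (Real.cosh t - 1)) :=
      mul_le_mul_of_nonneg_right hc2 hll
    have hp2 : 1 * (Real.log (Real.cosh t + 1) - Real.log (Real.cosh t - 1))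
        ≤ Real.cosh t * (Real.log (Real.cosh t + 1) - Real.log (Real.cosh t - 1)) :=
      mul_le_mul_of_nonneg_right (Real.one_le_cosh t) hll
    rw [abs_le]
    constructor <;> [linarith; linarith]
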